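/- Let G(s,r) = ρ₊κβc s²/2 + ρ₀(kc²-2Ωc)(e^{-2k(r+f(s))}/(2k) + r) with all constants positive, kc - 2Ω > 0, f(s) = βs²/(2(kc-2Ω)). Suppose r₀: (-s₀, s₀) → [0,∞) satisfies G(s, r₀(s)) = G(0,0) with r₀(0) = 0 and is differentiable at points where G_r > 0. Then for s ≠ 0, r₀'(s) = -βcs(ρ₊κ - ρ₀e^{-2ξ₀})/(ρ₀(kc²-2Ωc)(1 - e^{-2ξ₀})) where ξ₀ = k(r₀(s)+f(s)); and the sign condition r₀'(s) ≥ 0 for s > 0 (and ≤ 0 for s < 0) near the equator forces κ < ρ₀/ρ₊ < 1. -/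

import Mathlib

theorem thermocline_slope_and_kappa_bound
    (ρ₀ ρplus κ β c k Ω s₀ : ℝ)
    (hρ₀ : 0 < ρ₀) (hρplus : 0 < ρplus) (hρ : ρ₀ < ρplus) (hκ : 0 < κ) (hβ : 0 < β) (hc : 0 < c)
    (hk : 0 < k) (h1 : 0 < k * c ^ 2 - 2 * Ω * c) (h2 : 0 < k * c - 2 * Ω) (hs₀ : 0 < s₀)
    (f : ℝ → ℝ) (hf : ∀ s, f s = β * s ^ 2 / (2 * (k * c - 2 * Ω)))
    (G : ℝ → ℝ → ℝ)
    (hG : ∀ s r, G s r = ρplus * κ * β * c * s ^ 2 / 2 +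
        ρ₀ * (k * c ^ 2 - 2 * Ω * c) * (Real.exp (-(2 * k * (r + f s))) / (2 * k) + r))
    (r₀ : ℝ → ℝ) (hr₀0 : r₀ 0 = 0) (hcont : ContinuousOn r₀ (Set.Ioo (-s₀) s₀))
    (hnonneg : ∀ s ∈ Set.Ioo (-s₀) s₀, 0 ≤ r₀ s)
    (hlevel : ∀ s ∈ Set.Ioo (-s₀) s₀, G s (r₀ s) = G 0 0)
    (hdiff : ∀ s ∈ Set.Ioo (-s₀) s₀, s ≠ 0 → DifferentiableAt ℝ r₀ s) :
    (∀ s ∈ Set.Ioo (-s₀) s₀, s ≠ 0 →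
      deriv r₀ s = -(β * c * s * (ρplus * κ - ρ₀ * Real.exp (-(2 * k * (r₀ s + f s)))))
          / (ρ₀ * (k * c ^ 2 - 2 * Ω * c) * (1 - Real.exp (-(2 * k * (r₀ s + f s)))))) ∧
    ((∀ s ∈ Set.Ioo (-s₀) s₀, (0 < s → 0 ≤ deriv r₀ s) ∧ (s < 0 → deriv r₀ s ≤ 0)) →
      κ < ρ₀ / ρplus ∧ ρ₀ / ρplus < 1) := by
  have key : ∀ s ∈ Set.Ioo (-s₀) s₀, s ≠ 0 →
      deriv r₀ s = -(β * c * s * (ρplus * κ - ρ₀ * Real.exp (-(2 * k * (r₀ s + f s)))))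
          / (ρ₀ * (k * c ^ 2 - 2 * Ω * c) * (1 - Real.exp (-(2 * k * (r₀ s + f s))))) := by
    intro s hs hsne
    have hfs : 0 < f s := by
      rw [hf]
      have : 0 < s ^ 2 := by positivity
      positivity
    have hξ : 0 < 2 * k * (r₀ s + f s) := by
      have := hnonneg s hs
      have : 0 < r₀ s + f s := by linarith
      positivity
    have hE1 : Real.exp (-(2 * k * (r₀ s + f s))) < 1 := by
      rw [Real.exp_lt_one_iff]; linarith
    have hEpos : 0 < Real.exp (-(2 * k * (r₀ s + f s))) := Real.exp_pos _
    have hden : 0 < ρ₀ * (k * c ^ 2 - 2 * Ω * c) * (1 - Real.exp (-(2 * k * (r₀ s + f s)))) := by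
      have : 0 < 1 - Real.exp (-(2 * k * (r₀ s + f s))) := by linarith
      positivity
    set d := deriv r₀ s with hd
    have hder : HasDerivAt r₀ d s := (hdiff s hs hsne).hasDerivAt
    -- inner function
    have hinner : HasDerivAt (fun t => r₀ t + β * t ^ 2 / (2 * (k * c - 2 * Ω)))
        (d + β * (2 * s ^ 1) / (2 * (k * c - 2 * Ω))) s :=
      hder.add (((hasDerivAt_pow 2 s).const_mul β).div_const _)
    have hu : HasDerivAt (fun t => -(2 * k * (r₀ t + β * t ^ 2 / (2 * (k * c - 2 * Ω)))))
        (-(2 * k * (d + β * (2 * s ^ 1) / (2 * (k * c - 2 * Ω))))) s :=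
      (hinner.const_mul (2 * k)).neg
    have hexp := hu.exp
    have hH : HasDerivAt (fun t => G t (r₀ t))
        (ρplus * κ * β * c * (2 * s ^ 1) / 2 +
          ρ₀ * (k * c ^ 2 - 2 * Ω * c) *
            (Real.exp (-(2 * k * (r₀ s + β * s ^ 2 / (2 * (k * c - 2 * Ω))))) *
              (-(2 * k * (d + β * (2 * s ^ 1) / (2 * (k * c - 2 * Ω))))) / (2 * k) + d)) s := by
      have hfun : (fun t => G t (r₀ t)) = fun t =>
          ρplus * κ * β * c * t ^ 2 / 2 +
            ρ₀ * (k * c ^ 2 - 2 * Ω * c) *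
              (Real.exp (-(2 * k * (r₀ t + β * t ^ 2 / (2 * (k * c - 2 * Ω))))) / (2 * k) + r₀ t) := by
        funext t; rw [hG, hf]
      rw [hfun]
      exact ((((hasDerivAt_pow 2 s).const_mul (ρplus * κ * β * c)).div_const 2).add
        (((hexp.div_const (2 * k)).add hder).const_mul (ρ₀ * (k * c ^ 2 - 2 * Ω * c))))
    have heq : (fun t => G t (r₀ t)) =ᶠ[nhds s] fun _ => G 0 0 := by
      filter_upwards [Ioo_mem_nhds hs.1 hs.2] with t ht using hlevel t ht
    have h0 : HasDerivAt (fun t => G t (r₀ t)) 0 s :=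
      (hasDerivAt_const s (G 0 0)).congr_of_eventuallyEq heq
    have hDeq := hH.unique h0
    rw [← hf s] at hDeq
    set E := Real.exp (-(2 * k * (r₀ s + f s))) with hEdef
    rw [eq_div_iff hden.ne']
    have hkne : (2 * k : ℝ) ≠ 0 := by positivity
    have h2ne : (2 * (k * c - 2 * Ω) : ℝ) ≠ 0 := by positivity
    field_simp at hDeq
    have h8 : (8 * k * (k * c - 2 * Ω) : ℝ) ≠ 0 := by positivity
    refine mul_left_cancel₀ h8 ?_
    have hD : (c * k - 2 * Ω : ℝ) ≠ 0 := by intro h; apply h2.ne'; linarith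
    have hmul : β * s / (c * k - 2 * Ω) * (c * k - 2 * Ω) = β * s := div_mul_cancel₀ _ hD
    linear_combination (8 * k * (k * c - 2 * Ω)) * hDeq + (8 * k * (k * c - 2 * Ω) * c * ρ₀ * E) * hmul
  refine ⟨key, fun hsign => ?_⟩
  · set s := s₀ / 2 with hsdef
    have hsmem : s ∈ Set.Ioo (-s₀) s₀ := by constructor <;> · simp [hsdef]; linarith
    have hspos : 0 < s := by positivity
    have hdg := key s hsmem hspos.ne'
    have hmono := (hsign s hsmem).1 hspos
    rw [hdg] at hmono
    have hfs : 0 < f s := by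
      have h : 0 < s ^ 2 := by positivity
      rw [hf]; positivity
    have hξ : 0 < 2 * k * (r₀ s + f s) := by
      have := hnonneg s hsmem
      have : 0 < r₀ s + f s := by linarith
      positivity
    have hE1 : Real.exp (-(2 * k * (r₀ s + f s))) < 1 := by
      rw [Real.exp_lt_one_iff]; linarith
    have hEpos : 0 < Real.exp (-(2 * k * (r₀ s + f s))) := Real.exp_pos _
    have hden : 0 < ρ₀ * (k * c ^ 2 - 2 * Ω * c) * (1 - Real.exp (-(2 * k * (r₀ s + f s)))) := by
      have : 0 < 1 - Real.exp (-(2 * k * (r₀ s + f s))) := by linarith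
      positivity
    have hnum : ρplus * κ - ρ₀ * Real.exp (-(2 * k * (r₀ s + f s))) ≤ 0 := by
      by_contra hcon
      push_neg at hcon
      have hbcs : 0 < β * c * s := by positivity
      have : -(β * c * s * (ρplus * κ - ρ₀ * Real.exp (-(2 * k * (r₀ s + f s))))) < 0 := by nlinarith
      have := div_neg_of_neg_of_pos this hden
      linarith
    have hκlt : κ < ρ₀ / ρplus := by
      rw [lt_div_iff₀ hρplus]
      nlinarith
    exact ⟨hκlt, by rw [div_lt_one hρplus]; exact hρ⟩
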